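/- If f(y_1,...,y_n) is a quasisymmetric polynomial and g(x) is a formal power series in one variable with zero constant term, then f(g(x_1), g(x_2), ..., g(x_n)) is a quasisymmetric power series in x_1,...,x_n. -/

import Mathlib

open MvPolynomial Finset
open scoped Classical

/-- The exponent vector placing `β_t` in position `j_t`. -/
noncomputable def expVec {n k : ℕ} (j : Fin k → Fin n) (β : Fin k → ℕ) : Fin n →₀ ℕ :=
  Finsupp.equivFunOnFinite.symm (fun i => ∑ t : Fin k, if j t = i then β t else 0)

/-- Quasisymmetry for polynomials. -/
def IsQuasisymmetric {n : ℕ} {R : Type*} [CommSemiring R] (f : MvPolynomial (Fin n) R) : Prop :=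
  ∀ (k : ℕ) (β : Fin k → ℕ), (∀ t, 0 < β t) →
    ∀ j j' : Fin k → Fin n, StrictMono j → StrictMono j' →
      f.coeff (expVec j β) = f.coeff (expVec j' β)

/-- Quasisymmetry for multivariate power series. -/
def IsQuasisymmetricPS {n : ℕ} {R : Type*} [CommSemiring R]
    (f : MvPowerSeries (Fin n) R) : Prop :=
  ∀ (k : ℕ) (β : Fin k → ℕ), (∀ t, 0 < β t) →
    ∀ j j' : Fin k → Fin n, StrictMono j → StrictMono j' →
      MvPowerSeries.coeff (expVec j β) f = MvPowerSeries.coeff (expVec j' β) f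

/-- The power series `g(x_i)`, where `g` has coefficients `c : ℕ → R`, viewed in
`R⟦x_1,…,x_n⟧`: its coefficient at a monomial supported on `{i}` with exponent `m`
is `c m`, and it vanishes on all other monomials. -/
noncomputable def singleVarPS {n : ℕ} {R : Type*} [CommSemiring R] (c : ℕ → R) (i : Fin n) :
    MvPowerSeries (Fin n) R :=
  fun d => if d = Finsupp.single i (d i) then c (d i) else 0

/-- If `f` is a quasisymmetric polynomial and `g` is a one-variable power series with
zero constant term, then `f(g(x_1), …, g(x_n))` is a quasisymmetric power series. -/

lemma expVec_apply {n k : ℕ} (j : Fin k → Fin n) (β : Fin k → ℕ) (i : Fin n) :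
    expVec j β i = ∑ t : Fin k, if j t = i then β t else 0 := rfl

lemma expVec_apply_of_inj {n k : ℕ} {j : Fin k → Fin n} (hj : Function.Injective j)
    (β : Fin k → ℕ) (t : Fin k) : expVec j β (j t) = β t := by
  rw [expVec_apply]
  rw [Finset.sum_eq_single t]
  · simp
  · intro b _ hb
    simp [hj.ne hb]
  · simp

lemma expVec_apply_of_not_mem {n k : ℕ} {j : Fin k → Fin n} {i : Fin n}
    (h : ∀ t, j t ≠ i) (β : Fin k → ℕ) : expVec j β i = 0 := by
  rw [expVec_apply]
  exact Finset.sum_eq_zero (fun t _ => by simp [h t])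

lemma expVec_restrict {n k : ℕ} (j : Fin k → Fin n) (α : Fin k → ℕ) :
    expVec j α = expVec (j ∘ (Finset.univ.filter (fun t => α t ≠ 0)).orderEmbOfFin rfl)
      (α ∘ (Finset.univ.filter (fun t => α t ≠ 0)).orderEmbOfFin rfl) := by
  set s := Finset.univ.filter (fun t => α t ≠ 0) with hs
  set e := s.orderEmbOfFin (rfl : s.card = s.card)
  ext i
  rw [expVec_apply, expVec_apply]
  have h1 : ∑ t : Fin k, (if j t = i then α t else 0)
      = ∑ t ∈ s, (if j t = i then α t else 0) := by
    rw [← Finset.sum_filter_add_sum_filter_not Finset.univ (fun t => α t ≠ 0)]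
    have : ∑ t ∈ Finset.univ.filter (fun t => ¬ α t ≠ 0), (if j t = i then α t else 0) = 0 := by
      apply Finset.sum_eq_zero
      intro t ht
      simp only [Finset.mem_filter, not_not] at ht
      simp [ht.2]
    rw [hs, this, add_zero]
  rw [h1]
  have h2 : s = Finset.image e Finset.univ := by
    ext x
    simp only [Finset.mem_image, Finset.mem_univ, true_and]
    constructor
    · intro hx
      have : x ∈ Set.range e := by
        rw [Finset.range_orderEmbOfFin]
        exact hx
      exact this
    · rintro ⟨u, rfl⟩
      exact Finset.orderEmbOfFin_mem s rfl u
  rw [show (∑ t ∈ s, if j t = i then α t else 0)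
      = ∑ t ∈ Finset.image e Finset.univ, (if j t = i then α t else 0) from by rw [← h2]]
  rw [Finset.sum_image (fun a _ b _ h => e.injective h)]
  rfl

lemma coeff_singleVarPS {n : ℕ} {R : Type*} [CommSemiring R] (c : ℕ → R) (i : Fin n)
    (e : Fin n →₀ ℕ) :
    MvPowerSeries.coeff e (singleVarPS c i)
      = if e = Finsupp.single i (e i) then c (e i) else 0 := rfl

lemma coeff_singleVarPS_pow {n : ℕ} {R : Type*} [CommSemiring R] (c : ℕ → R) (i : Fin n)
    (a : ℕ) (e : Fin n →₀ ℕ) :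
    MvPowerSeries.coeff e ((singleVarPS c i) ^ a)
      = if e = Finsupp.single i (e i) then
          PowerSeries.coeff (e i) ((PowerSeries.mk c) ^ a) else 0 := by
  induction a generalizing e with
  | zero =>
    simp only [pow_zero, MvPowerSeries.coeff_one, PowerSeries.coeff_one]
    by_cases h0 : e = 0
    · subst h0; simp
    · rw [if_neg h0]
      by_cases h1 : e = Finsupp.single i (e i)
      · rw [if_pos h1, if_neg]
        intro h2
        exact h0 (by rw [h1, h2, Finsupp.single_zero])
      · rw [if_neg h1]
  | succ a ih =>
    rw [pow_succ, MvPowerSeries.coeff_mul]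
    by_cases he : e = Finsupp.single i (e i)
    · rw [if_pos he, pow_succ, PowerSeries.coeff_mul]
      -- bijection between antidiagonal e and antidiagonal (e i)
      rw [Finset.sum_nbij' (i := fun p => (p.1 i, p.2 i))
        (j := fun q => (Finsupp.single i q.1, Finsupp.single i q.2))]
      · intro p hp
        rw [Finset.HasAntidiagonal.mem_antidiagonal] at hp ⊢
        have := congrArg (fun d => d i) hp
        simpa using this
      · intro q hq
        rw [Finset.HasAntidiagonal.mem_antidiagonal] at hq ⊢
        rw [← Finsupp.single_add, hq, ← he]
      · intro p hp
        rw [Finset.HasAntidiagonal.mem_antidiagonal] at hp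
        have h1 : p.1 = Finsupp.single i (p.1 i) ∧ p.2 = Finsupp.single i (p.2 i) := by
          constructor <;> · ext i'
                            by_cases hii : i' = i
                            · subst hii; simp
                            · rw [Finsupp.single_apply, if_neg (Ne.symm hii)]
                              have := congrArg (fun d => d i') hp
                              simp only [Finsupp.add_apply] at this
                              rw [he] at this
                              rw [Finsupp.single_apply, if_neg (fun hh => hii hh.symm)] at this
                              omega
        exact Prod.ext h1.1.symm h1.2.symm
      · intro q hq
        simp
      · intro p hp
        rw [ih, coeff_singleVarPS]
        rw [Finset.HasAntidiagonal.mem_antidiagonal] at hp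
        have h1 : p.1 = Finsupp.single i (p.1 i) ∧ p.2 = Finsupp.single i (p.2 i) := by
          constructor <;> · ext i'
                            by_cases hii : i' = i
                            · subst hii; simp
                            · rw [Finsupp.single_apply, if_neg (Ne.symm hii)]
                              have := congrArg (fun d => d i') hp
                              simp only [Finsupp.add_apply] at this
                              rw [he] at this
                              rw [Finsupp.single_apply, if_neg (fun hh => hii hh.symm)] at this
                              omega
        rw [if_pos h1.1, if_pos h1.2]
        simp [PowerSeries.coeff_mk]
    · rw [if_neg he]
      apply Finset.sum_eq_zero
      intro p hp
      rw [Finset.HasAntidiagonal.mem_antidiagonal] at hp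
      rw [ih, coeff_singleVarPS]
      by_cases h1 : p.2 = Finsupp.single i (p.2 i)
      · by_cases h2 : p.1 = Finsupp.single i (p.1 i)
        · exfalso
          apply he
          rw [← hp, h1, h2, ← Finsupp.single_add]
          congr 1
          simp [← hp]
        · rw [if_neg h2, zero_mul]
      · rw [if_neg h1, mul_zero]

lemma coeff_prod_singleVarPS {n : ℕ} {R : Type*} [CommSemiring R] (c : ℕ → R)
    (d e : Fin n →₀ ℕ) :
    MvPowerSeries.coeff e (∏ i ∈ d.support, (singleVarPS c i) ^ (d i))
      = if e.support ⊆ d.support then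
          ∏ i ∈ d.support, PowerSeries.coeff (e i) ((PowerSeries.mk c) ^ (d i)) else 0 := by
  rw [MvPowerSeries.coeff_prod]
  have hsingle : ∀ l ∈ Finset.finsuppAntidiag d.support e,
      (∀ i ∈ d.support, l i = Finsupp.single i ((l i) i)) →
      (∀ i ∈ d.support, (l i) i = e i) ∧ e.support ⊆ d.support := by
    intro l hl hli
    rw [Finset.mem_finsuppAntidiag] at hl
    obtain ⟨hsum, hsupp⟩ := hl
    have he : ∀ i', e i' = ∑ i ∈ d.support, (l i) i' := by
      intro i'
      rw [← hsum]
      rw [Finsupp.finset_sum_apply]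
    constructor
    · intro i hi
      rw [he i]
      rw [Finset.sum_eq_single i]
      · intro b hb hbi
        rw [hli b hb, Finsupp.single_apply, if_neg hbi]
      · intro h; exact absurd hi h
    · intro i' hi'
      rw [Finsupp.mem_support_iff] at hi'
      by_contra hmem
      apply hi'
      rw [he i']
      apply Finset.sum_eq_zero
      intro i hi
      rw [hli i hi, Finsupp.single_apply, if_neg (fun h => hmem (by rw [← h]; exact hi))]
  by_cases hes : e.support ⊆ d.support
  · rw [if_pos hes]
    set l₀ : Fin n →₀ (Fin n →₀ ℕ) := Finsupp.equivFunOnFinite.symm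
      (fun i => if i ∈ d.support then Finsupp.single i (e i) else 0) with hl₀
    have hl₀app : ∀ i, l₀ i = if i ∈ d.support then Finsupp.single i (e i) else 0 :=
      fun i => rfl
    have hl₀mem : l₀ ∈ Finset.finsuppAntidiag d.support e := by
      rw [Finset.mem_finsuppAntidiag]
      constructor
      · ext i'
        rw [Finsupp.finset_sum_apply]
        by_cases hi' : i' ∈ d.support
        · rw [Finset.sum_eq_single i']
          · rw [hl₀app, if_pos hi', Finsupp.single_apply, if_pos rfl]
          · intro b hb hbi
            rw [hl₀app, if_pos hb, Finsupp.single_apply, if_neg hbi]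
          · intro h; exact absurd hi' h
        · have : e i' = 0 := by
            by_contra h
            exact hi' (hes (Finsupp.mem_support_iff.mpr h))
          rw [this]
          apply Finset.sum_eq_zero
          intro i hi
          rw [hl₀app, if_pos hi, Finsupp.single_apply,
            if_neg (fun h => hi' (by rw [← h]; exact hi))]
      · intro i hi
        rw [Finsupp.mem_support_iff] at hi
        by_contra hmem
        exact hi (by rw [hl₀app, if_neg hmem])
    rw [Finset.sum_eq_single_of_mem l₀ hl₀mem]
    · apply Finset.prod_congr rfl
      intro i hi
      simp [coeff_singleVarPS_pow, hl₀app, hi]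
    · intro l hl hne
      by_contra hprod
      have hli : ∀ i ∈ d.support, l i = Finsupp.single i ((l i) i) := by
        intro i hi
        by_contra hsi
        apply hprod
        apply Finset.prod_eq_zero hi
        rw [coeff_singleVarPS_pow, if_neg hsi]
      obtain ⟨hval, _⟩ := hsingle l hl hli
      apply hne
      ext i : 1
      by_cases hi : i ∈ d.support
      · rw [hl₀app, if_pos hi, hli i hi, hval i hi]
      · rw [hl₀app, if_neg hi]
        rw [Finset.mem_finsuppAntidiag] at hl
        by_contra hlz
        exact hi (hl.2 (Finsupp.mem_support_iff.mpr hlz))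
  · rw [if_neg hes]
    apply Finset.sum_eq_zero
    intro l hl
    by_contra hprod
    have hli : ∀ i ∈ d.support, l i = Finsupp.single i ((l i) i) := by
      intro i hi
      by_contra hsi
      apply hprod
      apply Finset.prod_eq_zero hi
      rw [coeff_singleVarPS_pow, if_neg hsi]
    exact hes (hsingle l hl hli).2

lemma expVec_support_subset {n k : ℕ} (j : Fin k → Fin n) (β : Fin k → ℕ) :
    (expVec j β).support ⊆ Finset.image j Finset.univ := by
  intro i hi
  rw [Finsupp.mem_support_iff] at hi
  rw [Finset.mem_image]
  by_contra h
  push_neg at h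
  exact hi (expVec_apply_of_not_mem (fun t => h t (Finset.mem_univ t)) β)

lemma expVec_support_of_pos {n k : ℕ} {j : Fin k → Fin n} (hj : Function.Injective j)
    {β : Fin k → ℕ} (hβ : ∀ t, 0 < β t) :
    (expVec j β).support = Finset.image j Finset.univ := by
  apply Finset.Subset.antisymm (expVec_support_subset j β)
  intro i hi
  rw [Finset.mem_image] at hi
  obtain ⟨t, _, rfl⟩ := hi
  rw [Finsupp.mem_support_iff, expVec_apply_of_inj hj]
  exact (hβ t).ne'

lemma expVec_eq_of_support {n k : ℕ} {j : Fin k → Fin n} (hj : Function.Injective j)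
    {d : Fin n →₀ ℕ} (hd : d.support ⊆ Finset.image j Finset.univ) :
    d = expVec j (fun t => d (j t)) := by
  ext i
  by_cases hi : ∃ t, j t = i
  · obtain ⟨t, rfl⟩ := hi
    rw [expVec_apply_of_inj hj]
  · push_neg at hi
    rw [expVec_apply_of_not_mem hi]
    by_contra h
    obtain ⟨t, _, ht⟩ := Finset.mem_image.mp (hd (Finsupp.mem_support_iff.mpr h))
    exact hi t ht

lemma expVec_inj {n k : ℕ} {j : Fin k → Fin n} (hj : Function.Injective j) :
    Function.Injective (expVec j (k := k)) := by
  intro α α' h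
  funext t
  rw [← expVec_apply_of_inj hj α t, ← expVec_apply_of_inj hj α' t, h]

lemma key_lemma {n k : ℕ} {R : Type*} [CommRing R] (f : MvPolynomial (Fin n) R)
    (c : ℕ → R) (hc : c 0 = 0) (β : Fin k → ℕ) (hβ : ∀ t, 0 < β t)
    (j : Fin k → Fin n) (hj : StrictMono j) :
    MvPowerSeries.coeff (expVec j β) (MvPolynomial.aeval (fun i : Fin n => singleVarPS c i) f)
      = ∑ α ∈ Fintype.piFinset (fun _ : Fin k => Finset.range (f.totalDegree + 1)),
          f.coeff (expVec j α) * ∏ t, PowerSeries.coeff (β t) ((PowerSeries.mk c) ^ (α t)) := by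
  have hjinj : Function.Injective j := hj.injective
  set E := expVec j β with hE
  set A := Fintype.piFinset (fun _ : Fin k => Finset.range (f.totalDegree + 1)) with hA
  set G := PowerSeries.mk c with hG
  -- step 1: expand aeval
  have step1 : MvPowerSeries.coeff E (MvPolynomial.aeval (fun i : Fin n => singleVarPS c i) f)
      = ∑ d ∈ f.support, f.coeff d *
          (if E.support ⊆ d.support then
            ∏ i ∈ d.support, PowerSeries.coeff (E i) (G ^ (d i)) else 0) := by
    rw [aeval_def, eval₂_eq, map_sum]
    apply Finset.sum_congr rfl
    intro d _
    rw [MvPowerSeries.algebraMap_apply]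
    simp only [Algebra.algebraMap_self, RingHom.id_apply]
    rw [MvPowerSeries.coeff_C_mul, coeff_prod_singleVarPS]
  rw [step1]
  -- define the term function
  set Ψ : (Fin n →₀ ℕ) → R := fun d => f.coeff d *
      (if E.support ⊆ d.support then
        ∏ i ∈ d.support, PowerSeries.coeff (E i) (G ^ (d i)) else 0) with hΨ
  have hEsupp : E.support = Finset.image j Finset.univ := expVec_support_of_pos hjinj hβ
  have hG0 : PowerSeries.constantCoeff G = 0 := by
    rw [hG]; simpa using hc
  -- nonzero terms of Ψ have support = E.support and bounded entries
  have hΨsupp : ∀ d, d ∈ f.support → Ψ d ≠ 0 → d ∈ Finset.image (expVec j) A := by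
    intro d hd hΨd
    have h1 : E.support ⊆ d.support := by
      by_contra h
      rw [hΨ] at hΨd
      simp only [if_neg h, mul_zero] at hΨd
      exact hΨd rfl
    have h2 : d.support ⊆ E.support := by
      intro i hi
      by_contra hie
      apply hΨd
      rw [hΨ]
      simp only [if_pos h1]
      rw [Finset.prod_eq_zero hi (by
        have hEi : E i = 0 := by
          by_contra h
          exact hie (Finsupp.mem_support_iff.mpr h)
        rw [hEi, PowerSeries.coeff_zero_eq_constantCoeff_apply, map_pow, hG0,
          zero_pow (Finsupp.mem_support_iff.mp hi)])]
      exact mul_zero _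
    rw [Finset.mem_image]
    refine ⟨fun t => d (j t), ?_, (expVec_eq_of_support hjinj (h2.trans hEsupp.le)).symm⟩
    rw [Fintype.mem_piFinset]
    intro t
    rw [Finset.mem_range, Nat.lt_succ_iff]
    calc d (j t) ≤ d.sum fun _ e => e := by
          by_cases h : d (j t) = 0
          · simp [h]
          · exact Finset.single_le_sum (f := fun i => d i) (fun _ _ => Nat.zero_le _)
              (Finsupp.mem_support_iff.mpr h)
      _ ≤ f.totalDegree := le_totalDegree hd
  -- extend the sum and reindex
  have e1 : ∑ d ∈ f.support, Ψ d = ∑ d ∈ f.support ∪ Finset.image (expVec j) A, Ψ d := by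
    apply Finset.sum_subset Finset.subset_union_left
    intro d _ hd
    simp only [hΨ]
    rw [MvPolynomial.notMem_support_iff.mp hd, zero_mul]
  have e2 : ∑ d ∈ Finset.image (expVec j) A, Ψ d
      = ∑ d ∈ f.support ∪ Finset.image (expVec j) A, Ψ d := by
    apply Finset.sum_subset Finset.subset_union_right
    intro d hd hdim
    rcases Finset.mem_union.mp hd with h | h
    · by_contra hne
      exact hdim (hΨsupp d h hne)
    · exact absurd h hdim
  rw [show f.support.sum Ψ = ∑ d ∈ f.support, Ψ d from rfl, e1, ← e2,
    Finset.sum_image (fun a _ b _ h => expVec_inj hjinj h)]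
  apply Finset.sum_congr rfl
  intro α _
  simp only [hΨ]
  by_cases hα : ∀ t, 0 < α t
  · have hsup : (expVec j α).support = E.support := by
      rw [hEsupp, expVec_support_of_pos hjinj hα]
    have hss : E.support ⊆ (expVec j α).support := by rw [hsup]
    rw [if_pos hss, hsup, hEsupp,
      Finset.prod_image (fun a _ b _ h => hjinj h)]
    congr 1
    apply Finset.prod_congr rfl
    intro t _
    rw [hE, expVec_apply_of_inj hjinj, expVec_apply_of_inj hjinj]
  · push_neg at hα
    obtain ⟨t₀, ht₀⟩ := hα
    have hα0 : α t₀ = 0 := Nat.le_zero.mp ht₀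
    have hrhs : ∏ t, PowerSeries.coeff (β t) (G ^ (α t)) = 0 := by
      apply Finset.prod_eq_zero (Finset.mem_univ t₀)
      rw [hα0, pow_zero, PowerSeries.coeff_one, if_neg (hβ t₀).ne']
    rw [hrhs, mul_zero]
    have hlhs : ¬ E.support ⊆ (expVec j α).support := by
      intro h
      have h1 : j t₀ ∈ E.support := by
        rw [hEsupp]
        exact Finset.mem_image.mpr ⟨t₀, Finset.mem_univ t₀, rfl⟩
      have h2 := h h1
      rw [Finsupp.mem_support_iff, expVec_apply_of_inj hjinj] at h2
      exact h2 hα0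
    rw [if_neg hlhs, mul_zero]

theorem stmt_11 {n : ℕ} {R : Type*} [CommRing R]
    (f : MvPolynomial (Fin n) R) (hf : IsQuasisymmetric f)
    (c : ℕ → R) (hc : c 0 = 0) :
    IsQuasisymmetricPS (MvPolynomial.aeval (fun i : Fin n => singleVarPS c i) f) := by
  intro k β hβ j j' hj hj'
  rw [key_lemma f c hc β hβ j hj, key_lemma f c hc β hβ j' hj']
  apply Finset.sum_congr rfl
  intro α _
  congr 1
  rw [expVec_restrict j α, expVec_restrict j' α]
  set s := Finset.univ.filter (fun t => α t ≠ 0) with hs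
  set e := s.orderEmbOfFin (rfl : s.card = s.card) with he
  apply hf s.card (α ∘ e)
  · intro u
    exact Nat.pos_of_ne_zero (Finset.mem_filter.mp (Finset.orderEmbOfFin_mem s rfl u)).2
  · exact hj.comp e.strictMono
  · exact hj'.comp e.strictMono
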